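/- For any density matrix ρ with spectral decomposition ρ = Σⱼ pⱼ|ψⱼ⟩⟨ψⱼ|, the minimum over s ∈ [0,1] of tr(ρ^s (ρ^T)^{1−s}) is attained at s = 1/2, and equals tr√(√ρ ρ^T √ρ) computed as Σ_{j,k} √(pⱼ p_k) |⟨ψⱼ|ψ_k*⟩|², i.e., min_{0≤s≤1} tr(ρ^s (ρ^T)^{1−s}) = Σ_{j,k} √(pⱼ p_k) |⟨ψⱼ|ψ_k*⟩|². -/

import Mathlib

open Matrix ComplexOrder

/-- Given the spectral data (p, ψ) of ρ, the matrix power ρ^s = Σⱼ pⱼ^s |ψⱼ⟩⟨ψⱼ|. -/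
noncomputable def rhoPow {d : ℕ} (p : Fin d → ℝ) (ψ : Fin d → Fin d → ℂ) (s : ℝ) :
    Matrix (Fin d) (Fin d) ℂ :=
  ∑ j, ((p j ^ s : ℝ) : ℂ) • Matrix.vecMulVec (ψ j) (fun i => star (ψ j i))

/-- The corresponding power of the transpose, (ρᵀ)^s = Σ_k p_k^s |ψ_k*⟩⟨ψ_k*|. -/
noncomputable def rhoTransposePow {d : ℕ} (p : Fin d → ℝ) (ψ : Fin d → Fin d → ℂ) (s : ℝ) :
    Matrix (Fin d) (Fin d) ℂ :=
  ∑ k, ((p k ^ s : ℝ) : ℂ) • Matrix.vecMulVec (fun i => star (ψ k i)) (ψ k)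

private lemma trace_complex {d : ℕ} (p : Fin d → ℝ) (ψ : Fin d → Fin d → ℂ) (s t : ℝ) :
    (rhoPow p ψ s * rhoTransposePow p ψ t).trace
      = ∑ j, ∑ k, ((p j ^ s * p k ^ t : ℝ) : ℂ) *
          ((∑ i, ψ j i * ψ k i) * ∑ i, star (ψ j i) * star (ψ k i)) := by
  simp only [rhoPow, rhoTransposePow, Matrix.trace, Matrix.diag, Matrix.mul_apply,
    Matrix.sum_apply, Matrix.smul_apply, Matrix.vecMulVec_apply, smul_eq_mul]
  simp_rw [Finset.sum_mul_sum]
  conv_lhs => enter [2,x]; rw [Finset.sum_comm]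
  rw [Finset.sum_comm]
  conv_lhs => enter [2,j,2,x]; rw [Finset.sum_comm]
  conv_lhs => enter [2,j]; rw [Finset.sum_comm]
  refine Finset.sum_congr rfl fun j _ => Finset.sum_congr rfl fun k _ => ?_
  rw [Finset.mul_sum]
  refine Finset.sum_congr rfl fun x _ => ?_
  rw [Finset.mul_sum]
  refine Finset.sum_congr rfl fun m _ => ?_
  push_cast
  ring

private lemma trace_re {d : ℕ} (p : Fin d → ℝ) (ψ : Fin d → Fin d → ℂ) (s t : ℝ) :
    ((rhoPow p ψ s * rhoTransposePow p ψ t).trace).re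
      = ∑ j, ∑ k, (p j ^ s * p k ^ t) *
          ‖∑ i, star (ψ j i) * star (ψ k i)‖ ^ 2 := by
  rw [trace_complex]
  rw [Complex.re_sum]
  refine Finset.sum_congr rfl fun j _ => ?_
  rw [Complex.re_sum]
  refine Finset.sum_congr rfl fun k _ => ?_
  have hc : (∑ i, ψ j i * ψ k i)
      = (starRingEnd ℂ) (∑ i, star (ψ j i) * star (ψ k i)) := by
    rw [map_sum]
    refine Finset.sum_congr rfl fun i _ => ?_
    simp [mul_comm]
  rw [hc, mul_comm ((starRingEnd ℂ) _), Complex.mul_conj]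
  rw [← Complex.ofReal_mul, Complex.ofReal_re, Complex.sq_norm]

private lemma amgm (x y : ℝ) (hx : 0 < x) (hy : 0 < y) (s : ℝ) :
    2 * Real.sqrt (x * y) ≤ x ^ s * y ^ (1 - s) + x ^ (1 - s) * y ^ s := by
  set A := x ^ s * y ^ (1 - s) with hA
  set B := x ^ (1 - s) * y ^ s with hB
  have hA0 : 0 ≤ A := by positivity
  have hB0 : 0 ≤ B := by positivity
  have hAB : A * B = x * y := by
    rw [hA, hB]
    rw [show x ^ s * y ^ (1 - s) * (x ^ (1 - s) * y ^ s)
        = (x ^ s * x ^ (1 - s)) * (y ^ (1 - s) * y ^ s) by ring]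
    rw [← Real.rpow_add hx, ← Real.rpow_add hy]
    norm_num
  rw [← hAB, Real.sqrt_mul hA0]
  nlinarith [sq_nonneg (Real.sqrt A - Real.sqrt B), Real.sq_sqrt hA0, Real.sq_sqrt hB0,
    Real.sqrt_nonneg A, Real.sqrt_nonneg B]

/-- For a positive definite density matrix ρ = Σⱼ pⱼ|ψⱼ⟩⟨ψⱼ|, the minimum over s ∈ [0,1]
of tr(ρ^s (ρᵀ)^{1−s}) is attained at s = 1/2 and equals Σ_{j,k} √(pⱼp_k)|⟨ψⱼ|ψ_k*⟩|². -/
theorem chernoff_min_at_half {d : ℕ} (p : Fin d → ℝ) (ψ : Fin d → Fin d → ℂ)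
    (hp : ∀ j, 0 < p j) (hsum : ∑ j, p j = 1)
    (horth : ∀ j k, (∑ i, star (ψ j i) * ψ k i) = if j = k then 1 else 0) :
    IsLeast {x : ℝ | ∃ s ∈ Set.Icc (0 : ℝ) 1,
        x = ((rhoPow p ψ s * rhoTransposePow p ψ (1 - s)).trace).re}
      (∑ j, ∑ k, Real.sqrt (p j * p k) *
        ‖∑ i, star (ψ j i) * star (ψ k i)‖ ^ 2) := by
  set a : Fin d → Fin d → ℝ :=
    fun j k => ‖∑ i, star (ψ j i) * star (ψ k i)‖ ^ 2 with ha_def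
  have ha0 : ∀ j k, 0 ≤ a j k := fun j k => by positivity
  have hasymm : ∀ j k, a j k = a k j := by
    intro j k
    simp only [ha_def]
    congr 2
    exact Finset.sum_congr rfl fun i _ => mul_comm _ _
  constructor
  · refine ⟨1/2, ⟨by norm_num, by norm_num⟩, ?_⟩
    rw [trace_re]
    refine Finset.sum_congr rfl fun j _ => Finset.sum_congr rfl fun k _ => ?_
    congr 1
    rw [show (1 : ℝ) - 1/2 = 1/2 by norm_num]
    rw [Real.sqrt_eq_rpow, Real.mul_rpow (hp j).le (hp k).le]
  · rintro x ⟨s, ⟨hs0, hs1⟩, rfl⟩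
    rw [trace_re]
    show ∑ j, ∑ k, Real.sqrt (p j * p k) * a j k
        ≤ ∑ j, ∑ k, (p j ^ s * p k ^ (1-s)) * a j k
    have hsym : (∑ j, ∑ k, (p j ^ (1-s) * p k ^ s) * a j k)
        = ∑ j, ∑ k, (p j ^ s * p k ^ (1-s)) * a j k := by
      rw [Finset.sum_comm]
      refine Finset.sum_congr rfl fun j _ => Finset.sum_congr rfl fun k _ => ?_
      rw [hasymm k j]; ring
    have key : ∑ j, ∑ k, 2 * (Real.sqrt (p j * p k) * a j k)
        ≤ ∑ j, ∑ k, ((p j ^ s * p k ^ (1-s)) * a j k + (p j ^ (1-s) * p k ^ s) * a j k) := by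
      refine Finset.sum_le_sum fun j _ => Finset.sum_le_sum fun k _ => ?_
      have := amgm (p j) (p k) (hp j) (hp k) s
      nlinarith [ha0 j k]
    have split : ∑ j, ∑ k, ((p j ^ s * p k ^ (1-s)) * a j k + (p j ^ (1-s) * p k ^ s) * a j k)
        = (∑ j, ∑ k, (p j ^ s * p k ^ (1-s)) * a j k)
          + ∑ j, ∑ k, (p j ^ (1-s) * p k ^ s) * a j k := by
      simp [Finset.sum_add_distrib]
    have e1 : ∑ j, ∑ k, 2 * (Real.sqrt (p j * p k) * a j k)
        = 2 * ∑ j, ∑ k, Real.sqrt (p j * p k) * a j k := by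
      rw [Finset.mul_sum]
      exact Finset.sum_congr rfl fun j _ => by rw [Finset.mul_sum]
    rw [e1, split, hsym] at key
    linarith [key]
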